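/- Conversely, if the Hankel matrix P = [p(vw)]_{v,w∈Σ*} of a string function p : Σ* → ℝ with p(ε) = 1 has rank at most d, then there exist π ∈ ℝ^d (or ℂ^d) and matrices M_a ∈ ℝ^{d×d} (a ∈ Σ) such that p(a₁...a_n) = πᵀ M_{a₁}···M_{a_n} 𝟙 for all words. -/

import Mathlib

open Matrix
set_option synthInstance.maxHeartbeats 1000000
set_option maxHeartbeats 1600000

private lemma sum_pad {n d : ℕ} (hnd : n ≤ d) (g : Fin n → ℝ) :
    (∑ j : Fin d, if hj : (j : ℕ) < n then g ⟨j, hj⟩ else 0) = ∑ j : Fin n, g j := by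
  rw [Fin.sum_univ_eq_sum_range (fun k => if hj : k < n then g ⟨k, hj⟩ else 0) d]
  rw [show (∑ j : Fin n, g j) = ∑ j : Fin n, (fun k => if hj : k < n then g ⟨k, hj⟩ else 0) (j : ℕ)
      by apply Finset.sum_congr rfl; intro j _; simp [j.isLt]]
  rw [Fin.sum_univ_eq_sum_range (fun k => if hj : k < n then g ⟨k, hj⟩ else 0) n]
  symm
  apply Finset.sum_subset (Finset.range_subset_range.2 hnd)
  intro x _ hx
  rw [dif_neg (by simpa using hx)]

theorem finitary_of_hankel_rank_le {A : Type*} [Fintype A] {d : ℕ}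
    (p : List A → ℝ) (hpε : p [] = 1)
    (hrank : Module.rank ℝ
      (Submodule.span ℝ (Set.range fun v : List A => fun w : List A => p (v ++ w)))
      ≤ d) :
    ∃ (π : Fin d → ℝ) (M : A → Matrix (Fin d) (Fin d) ℝ),
      ∀ v : List A, p v = π ⬝ᵥ ((v.map M).prod *ᵥ (fun _ => 1)) := by
  classical
  set V : Submodule ℝ (List A → ℝ) :=
    Submodule.span ℝ (Set.range fun v : List A => fun w : List A => p (v ++ w)) with hVdef
  have hfin : Module.Finite ℝ V := by
    rw [← Module.rank_lt_aleph0_iff]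
    exact lt_of_le_of_lt hrank (Cardinal.nat_lt_aleph0 d)
  haveI : Module.Free ℝ V := Module.Free.of_divisionRing ℝ V
  set n : ℕ := Module.finrank ℝ V with hn
  have hnd : n ≤ d := Module.finrank_le_of_rank_le hrank
  set b : Module.Basis (Fin n) ℝ V := Module.finBasis ℝ V with hb
  -- the functions p_v as elements of V
  have hqmem : ∀ v : List A, (fun w : List A => p (v ++ w)) ∈ V :=
    fun v => Submodule.subset_span ⟨v, rfl⟩
  set q : List A → V := fun v => ⟨fun w => p (v ++ w), hqmem v⟩ with hq
  -- shift maps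
  have hLa : ∀ a : A, ∀ f ∈ V, LinearMap.funLeft ℝ ℝ (fun w : List A => a :: w) f ∈ V := by
    intro a f hf
    have : V ≤ V.comap (LinearMap.funLeft ℝ ℝ (fun w : List A => a :: w)) := by
      rw [hVdef]
      apply Submodule.span_le.2
      rintro - ⟨v, rfl⟩
      apply Submodule.subset_span
      refine ⟨v ++ [a], ?_⟩
      funext w
      simp [LinearMap.funLeft, List.append_assoc]
    exact this hf
  set σ : A → (V →ₗ[ℝ] V) :=
    fun a => (LinearMap.funLeft ℝ ℝ (fun w : List A => a :: w)).restrict (hLa a) with hσ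
  have hσq : ∀ (a : A) (v : List A), σ a (q v) = q (v ++ [a]) := by
    intro a v
    apply Subtype.ext
    funext w
    show p (v ++ (a :: w)) = p ((v ++ [a]) ++ w)
    simp [List.append_assoc]
  set N : A → Matrix (Fin n) (Fin n) ℝ := fun a => LinearMap.toMatrix b b (σ a) with hN
  set r : List A → (Fin n → ℝ) := fun v => ⇑(b.repr (q v)) with hr
  have key1 : ∀ (v : List A) (a : A), r (v ++ [a]) = N a *ᵥ r v := by
    intro v a
    show ⇑(b.repr (q (v ++ [a]))) = N a *ᵥ ⇑(b.repr (q v))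
    rw [LinearMap.toMatrix_mulVec_repr b b (σ a) (q v), hσq]
  set e : Fin n → ℝ := fun i => (b i : List A → ℝ) [] with he
  have key2 : ∀ v : List A, p v = r v ⬝ᵥ e := by
    intro v
    have h1 : (q v : List A → ℝ) [] = p v := by simp [hq]
    conv_lhs => rw [← h1, ← b.sum_repr (q v)]
    rw [dotProduct]
    rw [show ((↑(∑ i, b.repr (q v) i • b i) : List A → ℝ) []) =
        ∑ i, (↑(b.repr (q v) i • b i) : List A → ℝ) [] by
      rw [AddSubmonoidClass.coe_finset_sum, Finset.sum_apply]]
    apply Finset.sum_congr rfl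
    intro i _
    simp [he, hr]
  -- find a coordinate where e is nonzero
  have hex : ∃ i₀, e i₀ ≠ 0 := by
    by_contra h
    push_neg at h
    have : p [] = 0 := by
      rw [key2 []]
      simp [dotProduct, h]
    rw [hpε] at this
    exact one_ne_zero this
  obtain ⟨i₀, he₀⟩ := hex
  -- the change-of-basis matrix S with S *ᵥ 1 = e
  set u : Fin n → ℝ := fun i => if i = i₀ then e i₀ else e i - 1 with hu
  set S : Matrix (Fin n) (Fin n) ℝ := (1 : Matrix (Fin n) (Fin n) ℝ).updateCol i₀ u with hS
  have hSdet : S.det = e i₀ := by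
    rw [hS, ← Matrix.cramer_apply, Matrix.cramer_one]
    simp [hu]
  haveI hSinv : Invertible S := S.invertibleOfIsUnitDet (by rw [hSdet]; exact (isUnit_iff_ne_zero.2 he₀))
  have hS1 : S *ᵥ (fun _ => (1 : ℝ)) = e := by
    funext i
    have hrow : ∀ j, S i j = (1 : Matrix (Fin n) (Fin n) ℝ) i j
        + (if j = i₀ then u i - (1 : Matrix (Fin n) (Fin n) ℝ) i i₀ else 0) := by
      intro j
      rw [hS, Matrix.updateCol_apply]
      by_cases hj : j = i₀
      · rw [if_pos hj, if_pos hj, hj]; ring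
      · rw [if_neg hj, if_neg hj, add_zero]
    show ∑ j, S i j * 1 = e i
    simp only [mul_one, hrow]
    rw [Finset.sum_add_distrib, Finset.sum_ite_eq' Finset.univ i₀ (fun _ => u i - (1 : Matrix (Fin n) (Fin n) ℝ) i i₀)]
    have hone : ∑ j, (1 : Matrix (Fin n) (Fin n) ℝ) i j = 1 := by
      simp [Matrix.one_apply, Finset.sum_ite_eq' Finset.univ i (fun _ => (1:ℝ))]
    rw [hone]
    simp only [Finset.mem_univ, if_true]
    by_cases hi : i = i₀
    · subst hi
      rw [hu]
      simp only [if_pos rfl, Matrix.one_apply_eq]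
      simp
    · rw [hu]; simp only [if_neg hi]; rw [Matrix.one_apply_ne hi]; ring
  -- products of transposed shift matrices
  set T : List A → Matrix (Fin n) (Fin n) ℝ := fun v => (v.map fun a => (N a)ᵀ).prod with hT
  have hTapp : ∀ (v : List A) (a : A), T (v ++ [a]) = T v * (N a)ᵀ := by
    intro v a
    rw [hT]
    simp
  have key3 : ∀ v : List A, r v = r [] ᵥ* T v := by
    intro v
    induction v using List.reverseRecOn with
    | nil => simp [hT]
    | append_singleton v a ih =>
      rw [key1 v a, hTapp, ← Matrix.vecMul_vecMul, ← ih, Matrix.vecMul_transpose]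
  set M' : A → Matrix (Fin n) (Fin n) ℝ := fun a => ⅟S * (N a)ᵀ * S with hM'
  have key4 : ∀ v : List A, T v * S = S * ((v.map M').prod) := by
    intro v
    induction v using List.reverseRecOn with
    | nil => simp [hT]
    | append_singleton v a ih =>
      rw [hTapp]
      have : (((v ++ [a]).map M').prod) = ((v.map M').prod) * M' a := by simp
      rw [this, ← Matrix.mul_assoc, ← ih, hM']
      calc T v * (N a)ᵀ * S = T v * (S * ⅟S) * ((N a)ᵀ * S) := by
            rw [mul_invOf_self, mul_one, mul_assoc]
        _ = T v * S * (⅟S * (N a)ᵀ * S) := by simp only [mul_assoc]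
  set π' : Fin n → ℝ := r [] ᵥ* S with hπ'
  have key5 : ∀ v : List A, p v = π' ⬝ᵥ ((v.map M').prod *ᵥ (fun _ => (1:ℝ))) := by
    intro v
    rw [key2 v, key3 v, ← Matrix.dotProduct_mulVec, ← hS1, Matrix.mulVec_mulVec, key4,
      ← Matrix.mulVec_mulVec, Matrix.dotProduct_mulVec, hπ']
  -- pad to dimension d
  refine ⟨fun i => if h : (i : ℕ) < n then π' ⟨i, h⟩ else 0,
    fun a => Matrix.of fun i j =>
      if h : (i : ℕ) < n ∧ (j : ℕ) < n then M' a ⟨i, h.1⟩ ⟨j, h.2⟩ else 0, ?_⟩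
  intro v
  set M : A → Matrix (Fin d) (Fin d) ℝ := fun a => Matrix.of fun i j =>
      if h : (i : ℕ) < n ∧ (j : ℕ) < n then M' a ⟨i, h.1⟩ ⟨j, h.2⟩ else 0 with hM
  have padkey : ∀ (v : List A) (i : Fin d) (hi : (i : ℕ) < n),
      ((v.map M).prod *ᵥ (fun _ => (1:ℝ))) i = ((v.map M').prod *ᵥ (fun _ => (1:ℝ))) ⟨i, hi⟩ := by
    intro v
    induction v with
    | nil => intro i hi; simp
    | cons a v ih =>
      intro i hi
      rw [List.map_cons, List.prod_cons, List.map_cons, List.prod_cons,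
        ← Matrix.mulVec_mulVec, ← Matrix.mulVec_mulVec]
      show ∑ j, M a i j * ((v.map M).prod *ᵥ (fun _ => (1:ℝ))) j = _
      rw [show (∑ j, M a i j * ((v.map M).prod *ᵥ (fun _ => (1:ℝ))) j)
          = ∑ j : Fin d, (if hj : (j : ℕ) < n then
              M' a ⟨i, hi⟩ ⟨j, hj⟩ * ((v.map M').prod *ᵥ (fun _ => (1:ℝ))) ⟨j, hj⟩ else 0) by
        apply Finset.sum_congr rfl
        intro j _
        by_cases hj : (j : ℕ) < n
        · rw [dif_pos hj, ih j hj, hM]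
          simp [hi, hj]
        · rw [dif_neg hj, hM]
          simp [hj]]
      rw [sum_pad hnd (fun j' => M' a ⟨(i : ℕ), hi⟩ j' * ((v.map M').prod *ᵥ (fun _ => (1:ℝ))) j')]
      rfl
  rw [key5 v, dotProduct, dotProduct]
  rw [show (∑ i : Fin d, (if h : (i : ℕ) < n then π' ⟨i, h⟩ else 0)
        * ((v.map M).prod *ᵥ (fun _ => (1:ℝ))) i)
      = ∑ i : Fin d, (if h : (i : ℕ) < n then
          π' ⟨i, h⟩ * ((v.map M').prod *ᵥ (fun _ => (1:ℝ))) ⟨i, h⟩ else 0) by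
    apply Finset.sum_congr rfl
    intro i _
    by_cases hi : (i : ℕ) < n
    · rw [dif_pos hi, dif_pos hi, padkey v i hi]
    · rw [dif_neg hi, dif_neg hi, zero_mul]]
  rw [sum_pad hnd (fun i' => π' i' * ((v.map M').prod *ᵥ (fun _ => (1:ℝ))) i')]
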